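/- For every α ∈ (0,1/2], c > 0, and u, v > 0, the function w ↦ 1/(c² + u^{2α} + u^{−2α} + v^{2α} + v^{−2α} + c(u^α + u^{−α})(v^α + v^{−α})), viewed as a function of w = v + 1/v ≥ 2 (for fixed u, c), is completely monotone; hence ρ(x) = 1/(c + x^α + x^{−α}) is hyperbolically completely monotone. -/

import Mathlib

/-- `f` is completely monotone on `s`. -/
def CompletelyMonotoneOn (f : ℝ → ℝ) (s : Set ℝ) : Prop :=
  ∀ n : ℕ, ∀ x ∈ s, 0 ≤ (-1 : ℝ) ^ n * iteratedDeriv n f x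

/-- `f` is hyperbolically completely monotone. -/
def HCM (f : ℝ → ℝ) : Prop :=
  ∀ u : ℝ, 0 < u → ∃ H : ℝ → ℝ, CompletelyMonotoneOn H (Set.Ici 2) ∧
    ∀ v : ℝ, 0 < v → f (u * v) * f (u / v) = H (v + 1 / v)

open Set Filter MeasureTheory intervalIntegral

noncomputable section


section CMalg

variable {U : Set ℝ} (hU : IsOpen U)

/-- completely monotone up to order `n` on `U`, with differentiability bookkeeping. -/
def CMg (U : Set ℝ) (n : ℕ) (f : ℝ → ℝ) : Prop :=
  ∀ m ≤ n, (∀ x ∈ U, DifferentiableAt ℝ (deriv^[m] f) x) ∧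
    ∀ x ∈ U, 0 ≤ (-1 : ℝ) ^ m * deriv^[m] f x

theorem CMg_mono {m n : ℕ} (h : m ≤ n) {f : ℝ → ℝ} (hf : CMg U n f) : CMg U m f :=
  fun k hk => hf k (hk.trans h)

include hU

theorem eqOn_deriv {f g : ℝ → ℝ} (h : EqOn f g U) : EqOn (deriv f) (deriv g) U := fun x hx =>
  Filter.EventuallyEq.deriv_eq (Filter.eventuallyEq_of_mem (hU.mem_nhds hx) h)

theorem eqOn_iter_deriv {f g : ℝ → ℝ} (h : EqOn f g U) (m : ℕ) :
    EqOn (deriv^[m] f) (deriv^[m] g) U := by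
  induction m with
  | zero => exact h
  | succ k ih =>
      rw [Function.iterate_succ_apply', Function.iterate_succ_apply']
      exact eqOn_deriv hU ih

theorem CMg_congr {f g : ℝ → ℝ} (h : EqOn f g U) {n : ℕ} (hf : CMg U n f) : CMg U n g := by
  intro m hm
  have he : ∀ x ∈ U, deriv^[m] f =ᶠ[nhds x] deriv^[m] g := fun x hx =>
    Filter.eventuallyEq_of_mem (hU.mem_nhds hx) (eqOn_iter_deriv hU h m)
  refine ⟨fun x hx => ((he x hx).differentiableAt_iff).1 ((hf m hm).1 x hx), fun x hx => ?_⟩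
  rw [← (eqOn_iter_deriv hU h m) hx]
  exact (hf m hm).2 x hx

omit hU

theorem iter_deriv_neg (h : ℝ → ℝ) (m : ℕ) :
    deriv^[m] (fun x => -(h x)) = fun x => -(deriv^[m] h x) := by
  induction m with
  | zero => rfl
  | succ k ih =>
      rw [Function.iterate_succ_apply', Function.iterate_succ_apply', ih]
      exact deriv.neg'

theorem iter_deriv_const_mul (a : ℝ) (h : ℝ → ℝ) (m : ℕ) :
    deriv^[m] (fun x => a * h x) = fun x => a * deriv^[m] h x := by
  induction m with
  | zero => rfl
  | succ k ih =>
      rw [Function.iterate_succ_apply', Function.iterate_succ_apply', ih]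
      exact deriv_const_mul_field' a

theorem CMg_neg_deriv {n : ℕ} {f : ℝ → ℝ} (hf : CMg U (n + 1) f) :
    CMg U n (fun x => -(deriv f x)) := by
  intro m hm
  have hrw : deriv^[m] (fun x => -(deriv f x)) = fun x => -(deriv^[m + 1] f x) := by
    rw [iter_deriv_neg]
    funext x
    rw [Function.iterate_succ_apply]
  rw [hrw]
  obtain ⟨hd, hs⟩ := hf (m + 1) (by omega)
  refine ⟨fun x hx => ((hd x hx).neg).congr_of_eventuallyEq
      (Filter.Eventually.of_forall fun y => rfl), fun x hx => ?_⟩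
  have h1 := hs x hx
  have h2 : (-1 : ℝ) ^ m * (fun x => -(deriv^[m + 1] f x)) x
      = (-1 : ℝ) ^ (m + 1) * deriv^[m + 1] f x := by
    show (-1 : ℝ) ^ m * -(deriv^[m + 1] f x) = _
    ring
  rw [h2]; exact h1

theorem CMg_const {n : ℕ} {k : ℝ} (hk : 0 ≤ k) : CMg U n (fun _ => k) := by
  have key : ∀ m : ℕ, deriv^[m] (fun _ : ℝ => k) = if m = 0 then (fun _ => k) else fun _ => 0 := by
    intro m
    induction m with
    | zero => simp
    | succ j ih =>
        rw [Function.iterate_succ_apply', ih]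
        by_cases hj : j = 0 <;> simp [hj]
  intro m _
  rw [key]
  by_cases hm : m = 0
  · simp only [hm, if_pos rfl]
    exact ⟨fun x _ => differentiableAt_const k, fun x _ => by simpa using hk⟩
  · simp only [if_neg hm]
    exact ⟨fun x _ => differentiableAt_const 0, fun x _ => by simp⟩

include hU

theorem CMg_add {n : ℕ} {f g : ℝ → ℝ} (hf : CMg U n f) (hg : CMg U n g) :
    CMg U n (fun x => f x + g x) := by
  have key : ∀ m ≤ n, EqOn (deriv^[m] fun x => f x + g x)
      (fun x => deriv^[m] f x + deriv^[m] g x) U := by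
    intro m hm
    induction m with
    | zero => exact fun x _ => rfl
    | succ k ih =>
        have hk : k ≤ n := by omega
        intro x hx
        rw [Function.iterate_succ_apply', Function.iterate_succ_apply',
          Function.iterate_succ_apply']
        have h1 : deriv (deriv^[k] fun x => f x + g x) x
            = deriv (fun x => deriv^[k] f x + deriv^[k] g x) x :=
          Filter.EventuallyEq.deriv_eq
            (Filter.eventuallyEq_of_mem (hU.mem_nhds hx) (ih hk))
        rw [h1, deriv_fun_add ((hf k hk).1 x hx) ((hg k hk).1 x hx)]
  intro m hm
  have he : ∀ x ∈ U, (deriv^[m] fun x => f x + g x) =ᶠ[nhds x]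
      (fun x => deriv^[m] f x + deriv^[m] g x) := fun x hx =>
    Filter.eventuallyEq_of_mem (hU.mem_nhds hx) (key m hm)
  constructor
  · intro x hx
    exact ((he x hx).differentiableAt_iff).2 (((hf m hm).1 x hx).add ((hg m hm).1 x hx))
  · intro x hx
    rw [key m hm hx, mul_add]
    exact add_nonneg ((hf m hm).2 x hx) ((hg m hm).2 x hx)

omit hU

theorem CMg_const_mul {n : ℕ} {a : ℝ} (ha : 0 ≤ a) {f : ℝ → ℝ} (hf : CMg U n f) :
    CMg U n (fun x => a * f x) := by
  intro m hm
  rw [iter_deriv_const_mul]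
  obtain ⟨hd, hs⟩ := hf m hm
  refine ⟨fun x hx => ((hd x hx).const_mul a).congr_of_eventuallyEq
      (Filter.Eventually.of_forall fun y => rfl), fun x hx => ?_⟩
  have h1 := hs x hx
  have h2 : (-1 : ℝ) ^ m * (fun x => a * deriv^[m] f x) x
      = a * ((-1 : ℝ) ^ m * deriv^[m] f x) := by
    show (-1 : ℝ) ^ m * (a * deriv^[m] f x) = _
    ring
  rw [h2]
  exact mul_nonneg ha h1

include hU

theorem CMg_mul {n : ℕ} : ∀ {f g : ℝ → ℝ}, CMg U n f → CMg U n g →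
    CMg U n (fun x => f x * g x) := by
  induction n with
  | zero =>
      intro f g hf hg m hm
      interval_cases m
      refine ⟨fun x hx => ((hf 0 le_rfl).1 x hx).mul ((hg 0 le_rfl).1 x hx), fun x hx => ?_⟩
      have h1 : (0:ℝ) ≤ f x := by simpa using (hf 0 le_rfl).2 x hx
      have h2 : (0:ℝ) ≤ g x := by simpa using (hg 0 le_rfl).2 x hx
      simpa using mul_nonneg h1 h2
  | succ n ih =>
      intro f g hf hg
      have hGcm : CMg U n (fun x => (-(deriv f x)) * g x + f x * (-(deriv g x))) := by
        apply CMg_add hU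
        · exact ih (CMg_neg_deriv hf) (CMg_mono (Nat.le_succ n) hg)
        · exact ih (CMg_mono (Nat.le_succ n) hf) (CMg_neg_deriv hg)
      have hderiv : EqOn (deriv fun x => f x * g x)
          (fun x => -((-(deriv f x)) * g x + f x * (-(deriv g x)))) U := by
        intro x hx
        have hfd : DifferentiableAt ℝ f x := (hf 0 (Nat.zero_le _)).1 x hx
        have hgd : DifferentiableAt ℝ g x := (hg 0 (Nat.zero_le _)).1 x hx
        rw [deriv_fun_mul hfd hgd]
        show _ = -((-(deriv f x)) * g x + f x * (-(deriv g x)))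
        ring
      intro m hm
      match m with
      | 0 =>
          refine ⟨fun x hx => ((hf 0 (Nat.zero_le _)).1 x hx).mul ((hg 0 (Nat.zero_le _)).1 x hx),
            fun x hx => ?_⟩
          have h1 : (0:ℝ) ≤ f x := by simpa using (hf 0 (Nat.zero_le _)).2 x hx
          have h2 : (0:ℝ) ≤ g x := by simpa using (hg 0 (Nat.zero_le _)).2 x hx
          simpa using mul_nonneg h1 h2
      | k + 1 =>
          have hk : k ≤ n := by omega
          have heq : EqOn (deriv^[k + 1] fun x => f x * g x)
              (fun x => -(deriv^[k] (fun x => (-(deriv f x)) * g x + f x * (-(deriv g x))) x))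
              U := by
            intro x hx
            rw [Function.iterate_succ_apply]
            rw [eqOn_iter_deriv hU hderiv k hx]
            rw [iter_deriv_neg]
          have he : ∀ x ∈ U, (deriv^[k + 1] fun x => f x * g x) =ᶠ[nhds x]
              (fun x => -(deriv^[k] (fun x => (-(deriv f x)) * g x + f x * (-(deriv g x))) x)) :=
            fun x hx => Filter.eventuallyEq_of_mem (hU.mem_nhds hx) heq
          constructor
          · intro x hx
            exact ((he x hx).differentiableAt_iff).2 ((hGcm k hk).1 x hx).neg
          · intro x hx
            rw [heq hx]
            have h1 := (hGcm k hk).2 x hx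
            have h2 : (-1 : ℝ) ^ (k + 1) *
                (fun x => -(deriv^[k] (fun x => (-(deriv f x)) * g x + f x * (-(deriv g x))) x)) x
                = (-1 : ℝ) ^ k *
                  deriv^[k] (fun x => (-(deriv f x)) * g x + f x * (-(deriv g x))) x := by
              show (-1 : ℝ) ^ (k + 1) * -(_) = _
              ring
            rw [h2]; exact h1

theorem CMg_inv {φ : ℝ → ℝ} (hpos : ∀ x ∈ U, 0 < φ x)
    (hdiff : ∀ x ∈ U, DifferentiableAt ℝ φ x)
    (hder : ∀ n, CMg U n (deriv φ)) : ∀ n, CMg U n (fun x => (φ x)⁻¹) := by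
  intro n
  induction n with
  | zero =>
      intro m hm; interval_cases m
      refine ⟨fun x hx => (hdiff x hx).inv (hpos x hx).ne', fun x hx => ?_⟩
      simp only [Function.iterate_zero_apply, pow_zero, one_mul]
      exact inv_nonneg.2 (hpos x hx).le
  | succ n ih =>
      have hGcm : CMg U n (fun x => deriv φ x * ((φ x)⁻¹ * (φ x)⁻¹)) :=
        CMg_mul hU (hder n) (CMg_mul hU ih ih)
      have hderiv : EqOn (deriv fun x => (φ x)⁻¹)
          (fun x => -(deriv φ x * ((φ x)⁻¹ * (φ x)⁻¹))) U := by
        intro x hx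
        rw [deriv_fun_inv'' (hdiff x hx) (hpos x hx).ne']
        show -deriv φ x / φ x ^ 2 = -(deriv φ x * ((φ x)⁻¹ * (φ x)⁻¹))
        rw [pow_two]
        ring
      intro m hm
      match m with
      | 0 =>
          refine ⟨fun x hx => (hdiff x hx).inv (hpos x hx).ne', fun x hx => ?_⟩
          simp only [Function.iterate_zero_apply, pow_zero, one_mul]
          exact inv_nonneg.2 (hpos x hx).le
      | k + 1 =>
          have hk : k ≤ n := by omega
          have heq : EqOn (deriv^[k + 1] fun x => (φ x)⁻¹)
              (fun x => -(deriv^[k] (fun x => deriv φ x * ((φ x)⁻¹ * (φ x)⁻¹)) x)) U := by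
            intro x hx
            rw [Function.iterate_succ_apply]
            rw [eqOn_iter_deriv hU hderiv k hx]
            rw [iter_deriv_neg]
          have he : ∀ x ∈ U, (deriv^[k + 1] fun x => (φ x)⁻¹) =ᶠ[nhds x]
              (fun x => -(deriv^[k] (fun x => deriv φ x * ((φ x)⁻¹ * (φ x)⁻¹)) x)) :=
            fun x hx => Filter.eventuallyEq_of_mem (hU.mem_nhds hx) heq
          constructor
          · intro x hx
            exact ((he x hx).differentiableAt_iff).2 ((hGcm k hk).1 x hx).neg
          · intro x hx
            rw [heq hx]
            have h1 := (hGcm k hk).2 x hx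
            have h2 : (-1 : ℝ) ^ (k + 1) *
                (fun x => -(deriv^[k] (fun x => deriv φ x * ((φ x)⁻¹ * (φ x)⁻¹)) x)) x
                = (-1 : ℝ) ^ k * deriv^[k] (fun x => deriv φ x * ((φ x)⁻¹ * (φ x)⁻¹)) x := by
              show (-1 : ℝ) ^ (k + 1) * -(_) = _
              ring
            rw [h2]; exact h1



end CMalg

/-- The basic kernels. -/
def Ik (β : ℝ) (n : ℕ) (x : ℝ) : ℝ :=
  ∫ r in Ioi (0:ℝ), r ^ (β + n) / (r ^ 2 + r * x + 1) ^ (n + 1)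

theorem den_pos {x r : ℝ} (hx : 0 ≤ x) (hr : 0 < r) : 0 < r ^ 2 + r * x + 1 := by nlinarith

theorem den_ge {x r : ℝ} (hx : 0 ≤ x) (hr : 0 < r) : r ^ 2 + 1 ≤ r ^ 2 + r * x + 1 := by nlinarith

/-- continuity of the kernels on `Ioi 0`. -/
theorem kernel_contOn {β : ℝ} {n : ℕ} {x : ℝ} (hx : 0 ≤ x) :
    ContinuousOn (fun r : ℝ => r ^ (β : ℝ) / (r ^ 2 + r * x + 1) ^ n) (Ioi (0:ℝ)) := by
  apply ContinuousOn.div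
  · exact fun r hr => (Real.continuousAt_rpow_const r β (Or.inl (ne_of_gt hr))).continuousWithinAt
  · exact (((continuousOn_pow 2).add (continuousOn_id.mul continuousOn_const)).add
      continuousOn_const).pow n
  · exact fun r hr => (pow_ne_zero _ (den_pos hx hr).ne')

theorem aux_integrable {a : ℝ} (ha : -1 < a) {k : ℕ} (hk : a - 2 * k < -1) :
    IntegrableOn (fun r : ℝ => r ^ a / (r ^ 2 + 1) ^ k) (Ioi (0:ℝ)) := by
  have hcont : ContinuousOn (fun r : ℝ => r ^ a / (r ^ 2 + 1) ^ k) (Ioi (0:ℝ)) := by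
    apply ContinuousOn.div
    · exact fun r hr => (Real.continuousAt_rpow_const r a (Or.inl (ne_of_gt hr))).continuousWithinAt
    · exact ((continuousOn_pow 2).add continuousOn_const).pow k
    · intro r hr
      positivity
  have h1 : IntegrableOn (fun r : ℝ => r ^ a / (r ^ 2 + 1) ^ k) (Ioc (0:ℝ) 1) := by
    have hbase : IntegrableOn (fun r : ℝ => r ^ a) (Ioc (0:ℝ) 1) :=
      (intervalIntegrable_iff_integrableOn_Ioc_of_le zero_le_one).1
        (intervalIntegral.intervalIntegrable_rpow' ha)
    apply Integrable.mono hbase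
      ((hcont.mono Ioc_subset_Ioi_self).aestronglyMeasurable measurableSet_Ioc)
    filter_upwards [ae_restrict_mem measurableSet_Ioc] with r hr
    have hr0 : 0 < r := hr.1
    have hden : (1:ℝ) ≤ (r ^ 2 + 1) ^ k := one_le_pow₀ (by nlinarith)
    rw [Real.norm_eq_abs, Real.norm_eq_abs, abs_of_nonneg (by positivity),
      abs_of_nonneg (Real.rpow_nonneg hr0.le a)]
    calc r ^ a / (r ^ 2 + 1) ^ k ≤ r ^ a / 1 := by
          apply div_le_div_of_nonneg_left (Real.rpow_nonneg hr0.le a) <;> [skip; exact hden] <;>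
            norm_num
      _ = r ^ a := by ring
  have h2 : IntegrableOn (fun r : ℝ => r ^ a / (r ^ 2 + 1) ^ k) (Ioi (1:ℝ)) := by
    have hbase : IntegrableOn (fun r : ℝ => r ^ (a - 2 * k)) (Ioi (1:ℝ)) :=
      integrableOn_Ioi_rpow_of_lt hk one_pos
    apply Integrable.mono hbase
      ((hcont.mono (Ioi_subset_Ioi zero_le_one)).aestronglyMeasurable measurableSet_Ioi)
    filter_upwards [ae_restrict_mem measurableSet_Ioi] with r hr
    have hr1 : (1:ℝ) < r := hr
    have hr0 : (0:ℝ) < r := lt_trans one_pos hr1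
    rw [Real.norm_eq_abs, Real.norm_eq_abs, abs_of_nonneg (by positivity),
      abs_of_nonneg (Real.rpow_nonneg hr0.le _)]
    have hden : r ^ (2 * k : ℝ) ≤ (r ^ 2 + 1) ^ k := by
      have : ((r ^ 2) ^ k : ℝ) ≤ (r ^ 2 + 1) ^ k :=
        pow_le_pow_left₀ (by positivity) (by nlinarith) k
      calc r ^ (2 * k : ℝ) = (r ^ (2:ℕ)) ^ (k:ℕ) := by
            rw [← Real.rpow_natCast (r ^ (2:ℕ)) k, ← Real.rpow_natCast r 2,
              ← Real.rpow_mul hr0.le]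
            norm_num [mul_comm]
        _ ≤ (r ^ 2 + 1) ^ k := this
    calc r ^ a / (r ^ 2 + 1) ^ k ≤ r ^ a / r ^ (2 * k : ℝ) := by
          apply div_le_div_of_nonneg_left (Real.rpow_nonneg hr0.le a)
            (by positivity) hden
      _ = r ^ (a - 2 * k) := by
          rw [← Real.rpow_sub hr0]
  have : IntegrableOn (fun r : ℝ => r ^ a / (r ^ 2 + 1) ^ k) (Ioc (0:ℝ) 1 ∪ Ioi 1) :=
    h1.union h2
  apply this.mono_set
  intro r hr
  rcases le_or_gt r 1 with h | h
  · exact Or.inl ⟨hr, h⟩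
  · exact Or.inr h

theorem kernel_integrable {β : ℝ} (hβ0 : 0 < β) (hβ1 : β < 1) (m : ℕ) {x : ℝ} (hx : 0 ≤ x) :
    IntegrableOn (fun r : ℝ => r ^ (β + m) / (r ^ 2 + r * x + 1) ^ (m + 1)) (Ioi (0:ℝ)) := by
  have hbase : IntegrableOn (fun r : ℝ => r ^ (β + m) / (r ^ 2 + 1) ^ (m + 1)) (Ioi (0:ℝ)) := by
    have hm : (0:ℝ) ≤ m := Nat.cast_nonneg m
    apply aux_integrable (by linarith)
    push_cast
    nlinarith
  apply Integrable.mono hbase ((kernel_contOn hx).aestronglyMeasurable measurableSet_Ioi)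
  filter_upwards [ae_restrict_mem measurableSet_Ioi] with r hr
  have hr0 : (0:ℝ) < r := hr
  rw [Real.norm_eq_abs, Real.norm_eq_abs, abs_of_nonneg (by positivity),
    abs_of_nonneg (by positivity)]
  apply div_le_div_of_nonneg_left (Real.rpow_nonneg hr0.le _) (by positivity)
  exact pow_le_pow_left₀ (by positivity) (den_ge hx hr0) _

theorem Ik_nonneg (β : ℝ) (n : ℕ) {x : ℝ} (hx : 0 ≤ x) : 0 ≤ Ik β n x := by
  apply setIntegral_nonneg measurableSet_Ioi
  intro r hr
  have hr0 : (0:ℝ) < r := hr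
  positivity

theorem Ik_hasDeriv {β : ℝ} (hβ0 : 0 < β) (hβ1 : β < 1) (n : ℕ) {x₀ : ℝ} (hx₀ : 1 < x₀) :
    HasDerivAt (Ik β n) (-((n:ℝ) + 1) * Ik β (n + 1) x₀) x₀ := by
  set ε := (x₀ - 1) / 2 with hε
  have hεpos : 0 < ε := by simp [hε]; linarith
  have hball : ∀ x ∈ Metric.ball x₀ ε, (1:ℝ) < x := by
    intro x hx
    have := abs_lt.1 (mem_ball_iff_norm.1 hx)
    simp [hε] at this ⊢
    linarith [this.1]
  set F : ℝ → ℝ → ℝ := fun x r => r ^ (β + n) / (r ^ 2 + r * x + 1) ^ (n + 1) with hF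
  set F' : ℝ → ℝ → ℝ := fun x r =>
    -((n:ℝ) + 1) * (r ^ (β + n) * r / (r ^ 2 + r * x + 1) ^ (n + 2)) with hF'
  have key := _root_.hasDerivAt_integral_of_dominated_loc_of_deriv_le (F := F) (F' := F')
      (μ := volume.restrict (Ioi (0:ℝ))) (x₀ := x₀)
      (bound := fun r => ((n:ℝ) + 1) * (r ^ (β + ((n+1:ℕ):ℝ)) / (r ^ 2 + 1) ^ (n + 2))) (Metric.ball_mem_nhds x₀ hεpos)
      ?_ ?_ ?_ ?_ ?_ ?_
  · -- conclude
    have h2 : (∫ r in Ioi (0:ℝ), F' x₀ r) = -((n:ℝ) + 1) * Ik β (n + 1) x₀ := by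
      rw [hF']
      rw [MeasureTheory.integral_const_mul]
      congr 1
      rw [Ik]
      apply setIntegral_congr_fun measurableSet_Ioi
      intro r hr
      have hr0 : (0:ℝ) < r := hr
      have h3 : r ^ (β + ((n + 1 : ℕ):ℝ)) = r ^ (β + n) * r := by
        rw [show β + (((n:ℕ) + 1 : ℕ):ℝ) = (β + n) + 1 by push_cast; ring,
          Real.rpow_add_one hr0.ne']
      show r ^ (β + (n:ℝ)) * r / (r ^ 2 + r * x₀ + 1) ^ (n + 2)
          = r ^ (β + ((n + 1 : ℕ):ℝ)) / (r ^ 2 + r * x₀ + 1) ^ (n + 1 + 1)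
      rw [h3]
    rw [← h2]
    exact key.2
  · -- measurability of F x for x near x₀
    filter_upwards [Metric.ball_mem_nhds x₀ hεpos] with x hx
    have hx0 : (0:ℝ) ≤ x := le_of_lt (lt_trans one_pos (hball x hx))
    exact (kernel_contOn hx0).aestronglyMeasurable measurableSet_Ioi
  · -- integrability of F x₀
    exact kernel_integrable hβ0 hβ1 n (le_of_lt (lt_trans one_pos hx₀))
  · -- measurability of F' x₀
    have hx0 : (0:ℝ) ≤ x₀ := le_of_lt (lt_trans one_pos hx₀)
    apply ContinuousOn.aestronglyMeasurable _ measurableSet_Ioi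
    apply ContinuousOn.congr
      (continuousOn_const.mul ((kernel_contOn (β := β + n) (n := n + 2) hx0).mul continuousOn_id))
    intro r _
    show F' x₀ r = -((n:ℝ)+1) * (r ^ (β + n) / (r ^ 2 + r * x₀ + 1) ^ (n + 2) * r)
    rw [hF']; ring
  · -- bound
    filter_upwards [ae_restrict_mem measurableSet_Ioi] with r hr
    intro x hx
    have hr0 : (0:ℝ) < r := hr
    have hx1 : (1:ℝ) < x := hball x hx
    have hx0 : (0:ℝ) ≤ x := by linarith
    have hden := den_pos hx0 hr0
    have hnum : r ^ (β + n) * r = r ^ (β + (((n:ℕ)+1:ℕ):ℝ)) := by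
      rw [show β + (((n:ℕ)+1:ℕ):ℝ) = (β + n) + 1 by push_cast; ring, Real.rpow_add_one hr0.ne']
    rw [hF', Real.norm_eq_abs, abs_mul, abs_of_nonneg (by positivity :
      (0:ℝ) ≤ r ^ (β + n) * r / (r ^ 2 + r * x + 1) ^ (n + 2))]
    have habs : |-(((n:ℝ))+1)| = (n:ℝ)+1 := by
      rw [abs_neg, abs_of_nonneg (by positivity)]
    rw [habs, hnum]
    apply mul_le_mul_of_nonneg_left _ (by positivity)
    apply div_le_div_of_nonneg_left (Real.rpow_nonneg hr0.le _) (by positivity)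
    exact pow_le_pow_left₀ (by positivity) (den_ge hx0 hr0) _
  · -- integrability of the bound
    apply Integrable.const_mul
    have hm : (0:ℝ) ≤ n := Nat.cast_nonneg n
    have := aux_integrable (a := β + (((n:ℕ)+1:ℕ):ℝ)) (by push_cast; linarith)
      (k := n + 2) (by push_cast; nlinarith)
    exact this
  · -- differentiability in x
    filter_upwards [ae_restrict_mem measurableSet_Ioi] with r hr
    intro x hx
    have hr0 : (0:ℝ) < r := hr
    have hx1 : (1:ℝ) < x := hball x hx
    have hx0 : (0:ℝ) ≤ x := by linarith
    have hqne : (r ^ 2 + r * x + 1) ≠ 0 := (den_pos hx0 hr0).ne'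
    have h1 : HasDerivAt (fun y : ℝ => r * y) r x := by
      simpa using (hasDerivAt_id x).const_mul r
    have hq : HasDerivAt (fun y : ℝ => r ^ 2 + r * y + 1) r x := by
      simpa using (h1.const_add (r ^ 2)).add_const 1
    have hqpow : HasDerivAt (fun y : ℝ => (r ^ 2 + r * y + 1) ^ (n + 1))
        (((n:ℝ) + 1) * (r ^ 2 + r * x + 1) ^ n * r) x := by
      have := hq.pow (n + 1)
      simp at this
      exact this
    have hinv := hqpow.inv (pow_ne_zero _ hqne)
    have hfin := hinv.const_mul (r ^ (β + (n:ℝ)))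
    have hval : F' x r = r ^ (β + (n:ℝ)) *
        (-((((n:ℝ) + 1) * (r ^ 2 + r * x + 1) ^ n * r)) / ((r ^ 2 + r * x + 1) ^ (n + 1)) ^ 2) := by
      rw [hF']
      field_simp
      ring
    have hfun : (fun y => F y r) = fun y : ℝ =>
        r ^ (β + (n:ℝ)) * ((r ^ 2 + r * y + 1) ^ (n + 1))⁻¹ := by
      funext y
      show r ^ (β + (n:ℝ)) / (r ^ 2 + r * y + 1) ^ (n + 1) = _
      rw [div_eq_mul_inv]
    rw [hval, hfun]
    exact hfin


noncomputable section

theorem Ik_iter_deriv {β : ℝ} (hβ0 : 0 < β) (hβ1 : β < 1) (m : ℕ) :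
    EqOn (deriv^[m] (Ik β 0))
      (fun x => ((-1:ℝ) ^ m * (Nat.factorial m : ℝ)) * Ik β m x) (Ioi (1:ℝ)) := by
  induction m with
  | zero => intro x _; simp
  | succ m ih =>
      intro x hx
      have hx1 : (1:ℝ) < x := hx
      rw [Function.iterate_succ_apply']
      have h1 : deriv (deriv^[m] (Ik β 0)) x
          = deriv (fun y => ((-1:ℝ) ^ m * (Nat.factorial m : ℝ)) * Ik β m y) x :=
        Filter.EventuallyEq.deriv_eq
          (Filter.eventuallyEq_of_mem (isOpen_Ioi.mem_nhds hx) ih)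
      rw [h1, deriv_const_mul_field, (Ik_hasDeriv hβ0 hβ1 m hx1).deriv]
      show ((-1:ℝ) ^ m * (Nat.factorial m : ℝ)) * (-((m:ℝ) + 1) * Ik β (m + 1) x)
          = ((-1:ℝ) ^ (m+1) * (Nat.factorial (m+1) : ℝ)) * Ik β (m + 1) x
      rw [Nat.factorial_succ]
      push_cast
      ring

theorem Ik_CMg {β : ℝ} (hβ0 : 0 < β) (hβ1 : β < 1) (n : ℕ) : CMg (Ioi (1:ℝ)) n (Ik β 0) := by
  intro m _
  constructor
  · intro x hx
    have hx1 : (1:ℝ) < x := hx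
    have hd : DifferentiableAt ℝ
        (fun y => ((-1:ℝ) ^ m * (Nat.factorial m : ℝ)) * Ik β m y) x :=
      ((Ik_hasDeriv hβ0 hβ1 m hx1).differentiableAt).const_mul _
    exact hd.congr_of_eventuallyEq
      (Filter.eventuallyEq_of_mem (isOpen_Ioi.mem_nhds hx) (Ik_iter_deriv hβ0 hβ1 m))
  · intro x hx
    have hx1 : (1:ℝ) < x := hx
    rw [Ik_iter_deriv hβ0 hβ1 m hx]
    have h4 : ((-1:ℝ) ^ m) * ((-1:ℝ) ^ m) = 1 := by
      rw [← pow_add]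
      exact Even.neg_one_pow ⟨m, by ring⟩
    have h5 : (-1:ℝ) ^ m * ((-1:ℝ) ^ m * (Nat.factorial m : ℝ) * Ik β m x)
        = ((-1:ℝ) ^ m * (-1:ℝ) ^ m) * ((Nat.factorial m : ℝ) * Ik β m x) := by ring
    rw [h5, h4, one_mul]
    exact mul_nonneg (by positivity) (Ik_nonneg β m (by linarith : (0:ℝ) ≤ x))

/-! ### the elementary integrals used for evaluation -/

theorem Jf_contOn {β a : ℝ} (ha : 0 < a) :
    ContinuousOn (fun r : ℝ => r ^ (β - 1) * (a / (r + a))) (Ioi (0:ℝ)) := by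
  apply ContinuousOn.mul
  · exact fun r hr =>
      (Real.continuousAt_rpow_const r (β-1) (Or.inl (ne_of_gt hr))).continuousWithinAt
  · apply ContinuousOn.div continuousOn_const (continuousOn_id.add continuousOn_const)
    intro r hr
    have : (0:ℝ) < r := hr
    show r + a ≠ 0
    positivity

theorem J_integrable {β a : ℝ} (hβ0 : 0 < β) (hβ1 : β < 1) (ha : 0 < a) :
    IntegrableOn (fun r : ℝ => r ^ (β - 1) * (a / (r + a))) (Ioi (0:ℝ)) := by
  have h1 : IntegrableOn (fun r : ℝ => r ^ (β - 1) * (a / (r + a))) (Ioc (0:ℝ) 1) := by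
    have hbase : IntegrableOn (fun r : ℝ => r ^ (β - 1)) (Ioc (0:ℝ) 1) :=
      (intervalIntegrable_iff_integrableOn_Ioc_of_le zero_le_one).1
        (intervalIntegral.intervalIntegrable_rpow' (by linarith))
    apply Integrable.mono hbase
      (((Jf_contOn ha).mono Ioc_subset_Ioi_self).aestronglyMeasurable measurableSet_Ioc)
    filter_upwards [ae_restrict_mem measurableSet_Ioc] with r hr
    have hr0 : (0:ℝ) < r := hr.1
    rw [Real.norm_eq_abs, Real.norm_eq_abs, abs_of_nonneg (by positivity),
      abs_of_nonneg (Real.rpow_nonneg hr0.le _)]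
    have : a / (r + a) ≤ 1 := by
      rw [div_le_one (by positivity)]; linarith
    calc r ^ (β - 1) * (a / (r + a)) ≤ r ^ (β - 1) * 1 :=
          mul_le_mul_of_nonneg_left this (Real.rpow_nonneg hr0.le _)
      _ = r ^ (β - 1) := by ring
  have h2 : IntegrableOn (fun r : ℝ => r ^ (β - 1) * (a / (r + a))) (Ioi (1:ℝ)) := by
    have hbase : IntegrableOn (fun r : ℝ => a * r ^ (β - 2)) (Ioi (1:ℝ)) :=
      (integrableOn_Ioi_rpow_of_lt (by linarith) one_pos).const_mul a
    apply Integrable.mono hbase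
      (((Jf_contOn ha).mono (Ioi_subset_Ioi zero_le_one)).aestronglyMeasurable measurableSet_Ioi)
    filter_upwards [ae_restrict_mem measurableSet_Ioi] with r hr
    have hr1 : (1:ℝ) < r := hr
    have hr0 : (0:ℝ) < r := by linarith
    rw [Real.norm_eq_abs, Real.norm_eq_abs, abs_of_nonneg (by positivity),
      abs_of_nonneg (by positivity)]
    have hstep : a / (r + a) ≤ a / r :=
      div_le_div_of_nonneg_left ha.le hr0 (by linarith)
    calc r ^ (β - 1) * (a / (r + a)) ≤ r ^ (β - 1) * (a / r) :=
          mul_le_mul_of_nonneg_left hstep (Real.rpow_nonneg hr0.le _)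
      _ = a * (r ^ (β - 1) * r⁻¹) := by ring
      _ = a * r ^ (β - 2) := by
          rw [← Real.rpow_neg_one r, ← Real.rpow_add hr0,
            show β - 1 + -1 = β - 2 by ring]
  have h3 : IntegrableOn (fun r : ℝ => r ^ (β - 1) * (a / (r + a)))
      (Ioc (0:ℝ) 1 ∪ Ioi 1) := h1.union h2
  apply h3.mono_set
  intro r hr
  rcases le_or_gt r 1 with h | h
  · exact Or.inl ⟨hr, h⟩
  · exact Or.inr h

theorem J_scale {β a : ℝ} (ha : 0 < a) :
    (∫ r in Ioi (0:ℝ), r ^ (β - 1) * (a / (r + a)))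
      = a ^ β * ∫ r in Ioi (0:ℝ), r ^ (β - 1) * (1 / (r + 1)) := by
  have key := MeasureTheory.integral_comp_mul_left_Ioi
    (fun r : ℝ => r ^ (β - 1) * (a / (r + a))) 0 ha
  rw [mul_zero] at key
  have hpt : ∀ x ∈ Ioi (0:ℝ), (fun r : ℝ => r ^ (β - 1) * (a / (r + a))) (a * x)
      = a ^ (β - 1) * (x ^ (β - 1) * (1 / (x + 1))) := by
    intro x hx
    have hx0 : (0:ℝ) < x := hx
    show (a * x) ^ (β - 1) * (a / (a * x + a)) = _
    rw [Real.mul_rpow ha.le hx0.le]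
    have : a / (a * x + a) = 1 / (x + 1) := by
      rw [show a * x + a = a * (x + 1) by ring]
      rw [div_eq_div_iff (by positivity) (by positivity)]
      ring
    rw [this]
    ring
  rw [setIntegral_congr_fun measurableSet_Ioi hpt] at key
  rw [MeasureTheory.integral_const_mul] at key
  have hbeta : (∫ x in Ioi (0:ℝ), (fun r : ℝ => r ^ (β - 1) * (a / (r + a))) x)
      = ∫ r in Ioi (0:ℝ), r ^ (β - 1) * (a / (r + a)) := rfl
  rw [hbeta, smul_eq_mul] at key
  have key2 : a * (a ^ (β - 1) * ∫ x in Ioi (0:ℝ), x ^ (β - 1) * (1 / (x + 1)))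
      = ∫ r in Ioi (0:ℝ), r ^ (β - 1) * (a / (r + a)) := by
    rw [key, ← mul_assoc, mul_inv_cancel₀ ha.ne', one_mul]
  have hpow : a ^ β = a * a ^ (β - 1) := by
    rw [show β = 1 + (β - 1) by ring, Real.rpow_add ha, Real.rpow_one,
      show 1 + (β - 1) - 1 = β - 1 by ring]
  rw [hpow, ← key2]
  ring

theorem J_one_pos {β : ℝ} (hβ0 : 0 < β) (hβ1 : β < 1) :
    0 < ∫ r in Ioi (0:ℝ), r ^ (β - 1) * (1 / (r + 1)) := by
  have hint := J_integrable hβ0 hβ1 one_pos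
  have hlow : ∀ r ∈ Ioc (1:ℝ) 2, (1/6 : ℝ) ≤ r ^ (β - 1) * (1 / (r + 1)) := by
    intro r hr
    have hr1 : (1:ℝ) ≤ r := hr.1.le
    have hr2 : r ≤ 2 := hr.2
    have h1 : r ^ (-1 : ℝ) ≤ r ^ (β - 1) :=
      Real.rpow_le_rpow_of_exponent_le hr1 (by linarith)
    have h2 : (1/2 : ℝ) ≤ r ^ (-1 : ℝ) := by
      rw [Real.rpow_neg_one]
      rw [le_inv_comm₀ (by norm_num) (by linarith)]
      linarith
    have h3 : (1/3 : ℝ) ≤ 1 / (r + 1) := by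
      rw [div_le_div_iff₀ (by norm_num) (by linarith)]
      linarith
    calc (1/6 : ℝ) = (1/2) * (1/3) := by norm_num
      _ ≤ r ^ (β - 1) * (1 / (r + 1)) :=
          mul_le_mul (le_trans h2 h1) h3 (by norm_num)
            (Real.rpow_nonneg (by linarith) _)
  have hsub : Ioc (1:ℝ) 2 ⊆ Ioi (0:ℝ) := fun r hr => lt_trans one_pos hr.1
  have h2 := MeasureTheory.setIntegral_ge_of_const_le (μ := volume) measurableSet_Ioc
    (by rw [Real.volume_Ioc]; exact ENNReal.ofReal_ne_top)
    hlow (hint.mono_set hsub)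
  have h3 : (∫ r in Ioc (1:ℝ) 2, r ^ (β - 1) * (1 / (r + 1)))
      ≤ ∫ r in Ioi (0:ℝ), r ^ (β - 1) * (1 / (r + 1)) := by
    apply setIntegral_mono_set hint
    · filter_upwards [ae_restrict_mem measurableSet_Ioi] with r hr
      have : (0:ℝ) < r := hr
      positivity
    · exact HasSubset.Subset.eventuallyLE hsub
  have h4 : volume.real (Ioc (1:ℝ) 2) = 1 := by
    rw [measureReal_def, Real.volume_Ioc]
    norm_num
  rw [h4, one_smul] at h2
  linarith

theorem Ik_eval {β : ℝ} (hβ0 : 0 < β) (hβ1 : β < 1) {v : ℝ} (hv : 1 < v) :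
    Ik β 0 (v + 1/v) = (∫ r in Ioi (0:ℝ), r ^ (β - 1) * (1 / (r + 1)))
      * (v ^ β - v ^ (-β)) / (v - 1/v) := by
  have hv0 : (0:ℝ) < v := by linarith
  have hvv : (0:ℝ) < v - 1/v := by
    have : 1/v < 1 := by rw [div_lt_one hv0]; exact hv
    linarith
  have hIv : (0:ℝ) < 1/v := by positivity
  -- main pointwise identity
  have hkey : ∀ r ∈ Ioi (0:ℝ),
      (v - 1/v) * (r ^ (β + ((0:ℕ):ℝ)) / (r ^ 2 + r * (v + 1/v) + 1) ^ (0 + 1))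
        = r ^ (β - 1) * (v / (r + v)) - r ^ (β - 1) * ((1/v) / (r + 1/v)) := by
    intro r hr
    have hr0 : (0:ℝ) < r := hr
    have hrv : (0:ℝ) < r + v := by linarith
    have hrv' : (0:ℝ) < r + 1/v := by linarith
    have hrp : r ^ (β + ((0:ℕ):ℝ)) = r ^ (β - 1) * r := by
      rw [show β + ((0:ℕ):ℝ) = (β - 1) + 1 by push_cast; ring, Real.rpow_add_one hr0.ne']
    rw [hrp]
    rw [show (r ^ 2 + r * (v + 1/v) + 1) = (r + v) * (r + 1/v) by field_simp; ring]
    rw [pow_one]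
    field_simp
    ring
  have hint_v := J_integrable hβ0 hβ1 hv0
  have hint_iv := J_integrable hβ0 hβ1 hIv
  have hsplit : (v - 1/v) * Ik β 0 (v + 1/v)
      = (∫ r in Ioi (0:ℝ), r ^ (β - 1) * (v / (r + v)))
        - ∫ r in Ioi (0:ℝ), r ^ (β - 1) * ((1/v) / (r + 1/v)) := by
    rw [Ik, ← MeasureTheory.integral_const_mul, ← MeasureTheory.integral_sub hint_v hint_iv]
    exact setIntegral_congr_fun measurableSet_Ioi hkey
  have hs1 := J_scale (β := β) hv0
  have hs2 := J_scale (β := β) hIv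
  have hneg : (1/v) ^ β = v ^ (-β) := by
    rw [one_div, Real.inv_rpow hv0.le, ← Real.rpow_neg hv0.le]
  rw [hs1, hs2, hneg] at hsplit
  have : (v - 1/v) * Ik β 0 (v + 1/v) = (∫ r in Ioi (0:ℝ), r ^ (β - 1) * (1 / (r + 1)))
      * (v ^ β - v ^ (-β)) := by
    rw [hsplit]; ring
  rw [eq_div_iff hvv.ne']
  linear_combination this

end


noncomputable section Sfun

/-- normalisation constant -/
def Mc (β : ℝ) : ℝ := ∫ r in Ioi (0:ℝ), r ^ (β - 1) * (1 / (r + 1))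

/-- the function `S β` of `w = v + 1/v`, equal to `v^β + v^(-β)`. -/
def S (β : ℝ) (x : ℝ) : ℝ := 2 + (β / Mc β) * ∫ y in (2:ℝ)..x, Ik β 0 y

theorem Mc_pos {β : ℝ} (hβ0 : 0 < β) (hβ1 : β < 1) : 0 < Mc β := J_one_pos hβ0 hβ1

theorem Ik_contOn {β : ℝ} (hβ0 : 0 < β) (hβ1 : β < 1) :
    ContinuousOn (Ik β 0) (Ioi (1:ℝ)) := fun x hx =>
  ((Ik_hasDeriv hβ0 hβ1 0 hx).differentiableAt.continuousAt).continuousWithinAt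

theorem Ik_intervalIntegrable {β : ℝ} (hβ0 : 0 < β) (hβ1 : β < 1) {x : ℝ} (hx : 1 < x) :
    IntervalIntegrable (Ik β 0) volume 2 x := by
  apply ContinuousOn.intervalIntegrable
  apply (Ik_contOn hβ0 hβ1).mono
  intro y hy
  rcases le_total (2:ℝ) x with h | h
  · have := hy.1; have := hy.2
    simp only [uIcc_of_le h] at hy
    exact lt_of_lt_of_le one_lt_two hy.1
  · simp only [uIcc_of_ge h] at hy
    exact lt_of_lt_of_le hx hy.1

theorem S_hasDerivAt {β : ℝ} (hβ0 : 0 < β) (hβ1 : β < 1) {x : ℝ} (hx : 1 < x) :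
    HasDerivAt (S β) ((β / Mc β) * Ik β 0 x) x := by
  have h1 : HasDerivAt (fun u => ∫ y in (2:ℝ)..u, Ik β 0 y) (Ik β 0 x) x := by
    apply intervalIntegral.integral_hasDerivAt_right (Ik_intervalIntegrable hβ0 hβ1 hx)
      (ContinuousOn.stronglyMeasurableAtFilter isOpen_Ioi (Ik_contOn hβ0 hβ1) x hx)
      ((Ik_hasDeriv hβ0 hβ1 0 hx).differentiableAt.continuousAt)
  exact (h1.const_mul (β / Mc β)).const_add 2

theorem Ik_le_Mc {β : ℝ} (hβ0 : 0 < β) (hβ1 : β < 1) {y : ℝ} (hy : 1 ≤ y) :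
    Ik β 0 y ≤ Mc β := by
  rw [Ik, Mc]
  apply setIntegral_mono_on (kernel_integrable hβ0 hβ1 0 (by linarith))
    (J_integrable hβ0 hβ1 one_pos) measurableSet_Ioi
  intro r hr
  have hr0 : (0:ℝ) < r := hr
  have hrp : r ^ (β + ((0:ℕ):ℝ)) = r ^ (β - 1) * r := by
    rw [show β + ((0:ℕ):ℝ) = (β - 1) + 1 by push_cast; ring, Real.rpow_add_one hr0.ne']
  rw [hrp, pow_one]
  rw [div_le_iff₀ (by nlinarith), mul_assoc]
  apply mul_le_mul_of_nonneg_left _ (Real.rpow_nonneg hr0.le _)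
  rw [div_mul_eq_mul_div, le_div_iff₀ (by linarith)]
  nlinarith

theorem S_ge_one {β : ℝ} (hβ0 : 0 < β) (hβ1 : β < 1) {x : ℝ} (hx : 1 < x) :
    1 ≤ S β x := by
  have hM := Mc_pos hβ0 hβ1
  rcases le_total (2:ℝ) x with h | h
  · have hnn : 0 ≤ ∫ y in (2:ℝ)..x, Ik β 0 y := by
      apply intervalIntegral.integral_nonneg h
      intro y hy
      exact Ik_nonneg β 0 (by linarith [hy.1] : (0:ℝ) ≤ y)
    have : 0 ≤ (β / Mc β) * ∫ y in (2:ℝ)..x, Ik β 0 y :=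
      mul_nonneg (by positivity) hnn
    rw [S]; linarith
  · -- 1 < x ≤ 2
    have hswap : (∫ y in (2:ℝ)..x, Ik β 0 y) = -∫ y in x..(2:ℝ), Ik β 0 y :=
      (intervalIntegral.integral_symm x 2)
    have hIint : IntervalIntegrable (Ik β 0) volume x 2 :=
      (Ik_intervalIntegrable hβ0 hβ1 hx).symm
    have hle : (∫ y in x..(2:ℝ), Ik β 0 y) ≤ ∫ y in x..(2:ℝ), Mc β := by
      apply intervalIntegral.integral_mono_on h hIint (intervalIntegrable_const)
      intro y hy
      exact Ik_le_Mc hβ0 hβ1 (by linarith [hy.1])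
    rw [intervalIntegral.integral_const, smul_eq_mul] at hle
    have hb : (β / Mc β) * ∫ y in (2:ℝ)..x, Ik β 0 y ≥ -1 := by
      rw [hswap]
      have h2 : (β / Mc β) * ∫ y in x..(2:ℝ), Ik β 0 y ≤ (β / Mc β) * ((2 - x) * Mc β) :=
        mul_le_mul_of_nonneg_left hle (by positivity)
      have h3 : (β / Mc β) * ((2 - x) * Mc β) = β * (2 - x) := by
        field_simp
      have h4 : β * (2 - x) ≤ 1 := by nlinarith
      have h5 : (β / Mc β) * ∫ y in x..(2:ℝ), Ik β 0 y ≤ 1 := by linarith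
      nlinarith [h5]
    rw [S]; linarith

theorem S_val {β : ℝ} (hβ0 : 0 < β) (hβ1 : β < 1) :
    ∀ v : ℝ, 0 < v → S β (v + 1/v) = v ^ β + v ^ (-β) := by
  have main : ∀ v : ℝ, 1 ≤ v → S β (v + 1/v) = v ^ β + v ^ (-β) := by
    intro v hv
    have hM := Mc_pos hβ0 hβ1
    -- functions on [1, v]
    set f : ℝ → ℝ := fun t => S β (t + 1/t) with hf
    set g : ℝ → ℝ := fun t => t ^ β + t ^ (-β) with hg
    set f' : ℝ → ℝ := fun t => β * (t ^ β - t ^ (-β)) / t with hf'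
    have hw_gt : ∀ t : ℝ, 1 ≤ t → 1 < t + 1/t := by
      intro t ht
      have ht0 : (0:ℝ) < t := by linarith
      have h2 : 2 ≤ t + 1/t := by
        rw [← sub_nonneg]
        have : t + 1/t - 2 = (t - 1)^2 / t := by field_simp; ring
        rw [this]; positivity
      linarith
    have hinner : ∀ t : ℝ, 1 ≤ t → HasDerivAt (fun s : ℝ => s + 1/s) (1 - 1/t^2) t := by
      intro t ht
      have ht0 : t ≠ 0 := by intro h; rw [h] at ht; norm_num at ht
      have h0 := (hasDerivAt_id t).add (hasDerivAt_inv ht0)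
      have h1 : HasDerivAt (fun s : ℝ => s + 1/s) (1 + -(t^2)⁻¹) t := by
        rw [show (fun s : ℝ => s + 1/s) = id + fun y => y⁻¹ by funext s; simp [one_div]]
        exact h0
      convert h1 using 1
      rw [one_div]
      ring
    have hfderiv : ∀ t ∈ Ico (1:ℝ) v, HasDerivAt f (f' t) t := by
      intro t ht
      have ht1 : (1:ℝ) ≤ t := ht.1
      have ht0 : (0:ℝ) < t := by linarith
      have hcomp := (S_hasDerivAt hβ0 hβ1 (hw_gt t ht1)).comp t (hinner t ht1)
      have hval : (β / Mc β) * Ik β 0 (t + 1/t) * (1 - 1/t^2) = f' t := by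
        rcases eq_or_lt_of_le ht1 with rfl | ht1'
        · simp [hf', Real.one_rpow]
        · rw [Ik_eval hβ0 hβ1 ht1']
          have hvv : (0:ℝ) < t - 1/t := by
            have : 1/t < 1 := by rw [div_lt_one ht0]; exact ht1'
            linarith
          rw [hf']
          rw [show (∫ (r : ℝ) in Ioi (0:ℝ), r ^ (β - 1) * (1 / (r + 1))) = Mc β from rfl]
          have hfac : t - 1/t = t * (1 - 1/t^2) := by field_simp
          have e_eq : (1 - 1/t^2) = (t - 1/t) / t := by
            rw [hfac, mul_comm, mul_div_assoc, div_self ht0.ne', mul_one]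
          rw [e_eq]
          have c2 : β / Mc β * (Mc β * (t ^ β - t ^ (-β)) / (t - 1/t)) * ((t - 1/t) / t)
              = (β * (t ^ β - t ^ (-β)) / t) * (Mc β / Mc β) * ((t - 1/t) / (t - 1/t)) := by
            ring
          rw [c2, div_self hM.ne', div_self hvv.ne', mul_one, mul_one]
      rw [← hval]
      exact hcomp
    have hgderiv : ∀ t ∈ Ico (1:ℝ) v, HasDerivAt g (f' t) t := by
      intro t ht
      have ht0 : (0:ℝ) < t := by linarith [ht.1]
      have h1 := Real.hasDerivAt_rpow_const (x := t) (p := β) (Or.inl ht0.ne')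
      have h2 := Real.hasDerivAt_rpow_const (x := t) (p := -β) (Or.inl ht0.ne')
      have hsum := h1.add h2
      have hval : β * t ^ (β - 1) + (-β) * t ^ (-β - 1) = f' t := by
        rw [hf', Real.rpow_sub ht0, Real.rpow_sub ht0, Real.rpow_one]
        field_simp
        ring
      rw [← hval]
      exact hsum
    have hfcont : ContinuousOn f (Icc (1:ℝ) v) := by
      intro t ht
      have ht1 : (1:ℝ) ≤ t := ht.1
      have hc := ((S_hasDerivAt hβ0 hβ1 (hw_gt t ht1)).comp t
        (hinner t ht1)).differentiableAt.continuousAt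
      exact hc.continuousWithinAt
    have hgcont : ContinuousOn g (Icc (1:ℝ) v) := by
      intro t ht
      have ht0 : (0:ℝ) < t := by linarith [ht.1]
      have h1 : ContinuousAt (fun s : ℝ => s ^ β + s ^ (-β)) t :=
        ((Real.continuousAt_rpow_const t β (Or.inl ht0.ne')).add
          (Real.continuousAt_rpow_const t (-β) (Or.inl ht0.ne')))
      exact h1.continuousWithinAt
    have hstart : f 1 = g 1 := by
      rw [hf, hg]
      norm_num [S, intervalIntegral.integral_same, Real.one_rpow]
    have hfin := eq_of_has_deriv_right_eq (f' := f')
      (fun x hx => (hfderiv x hx).hasDerivWithinAt)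
      (fun x hx => (hgderiv x hx).hasDerivWithinAt) hfcont hgcont hstart v ⟨hv, le_rfl⟩
    exact hfin
  intro v hv
  rcases le_total 1 v with h | h
  · exact main v h
  · have hv1 : 1 ≤ 1/v := by rw [le_div_iff₀ hv]; linarith
    have heq := main (1/v) hv1
    have h1 : 1/(1/v) = v := by field_simp
    rw [h1] at heq
    have h2 : (1/v) ^ β = v ^ (-β) := by
      rw [one_div, Real.inv_rpow hv.le, ← Real.rpow_neg hv.le]
    have h3 : (1/v) ^ (-β) = v ^ β := by
      rw [one_div, Real.inv_rpow hv.le, ← Real.rpow_neg hv.le, neg_neg]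
    rw [show 1/v + v = v + 1/v by ring] at heq
    rw [heq, h2, h3]
    ring

end Sfun


end

theorem rho_HCM (α : ℝ) (hα : α ∈ Set.Ioc (0:ℝ) (1/2)) (c : ℝ) (hc : 0 < c) :
    (∀ u : ℝ, 0 < u → ∃ H : ℝ → ℝ, CompletelyMonotoneOn H (Set.Ici 2) ∧
      ∀ v : ℝ, 0 < v →
        1 / (c ^ 2 + u ^ (2 * α) + u ^ (-(2 * α)) + v ^ (2 * α) + v ^ (-(2 * α)) +
              c * (u ^ α + u ^ (-α)) * (v ^ α + v ^ (-α))) = H (v + 1 / v)) ∧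
    HCM (fun x : ℝ => 1 / (c + x ^ α + x ^ (-α))) := by
  obtain ⟨hα0, hα2⟩ := hα
  have hα1 : α < 1 := by linarith
  have main : ∀ u : ℝ, 0 < u → ∃ H : ℝ → ℝ, CompletelyMonotoneOn H (Set.Ici 2) ∧
      ∀ v : ℝ, 0 < v →
        1 / (c ^ 2 + u ^ (2 * α) + u ^ (-(2 * α)) + v ^ (2 * α) + v ^ (-(2 * α)) +
              c * (u ^ α + u ^ (-α)) * (v ^ α + v ^ (-α))) = H (v + 1 / v) := by
    intro u hu
    set K : ℝ := c ^ 2 + u ^ (2 * α) + u ^ (-(2 * α)) with hK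
    set b : ℝ := c * (u ^ α + u ^ (-α)) with hb
    have hKpos : 0 < K := by
      have h1 : (0:ℝ) < u ^ (2 * α) := Real.rpow_pos_of_pos hu _
      have h2 : (0:ℝ) < u ^ (-(2 * α)) := Real.rpow_pos_of_pos hu _
      positivity
    have hbpos : 0 < b := by
      have h1 : (0:ℝ) < u ^ α := Real.rpow_pos_of_pos hu _
      have h2 : (0:ℝ) < u ^ (-α) := Real.rpow_pos_of_pos hu _
      positivity
    -- the `2α`-part
    obtain ⟨T, DT, hTval, hTge, hTder, hTcm⟩ :
        ∃ (T DT : ℝ → ℝ), (∀ v : ℝ, 0 < v → T (v + 1/v) = v ^ (2*α) + v ^ (-(2*α))) ∧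
          (∀ x ∈ Ioi (1:ℝ), 1 ≤ T x) ∧
          (∀ x ∈ Ioi (1:ℝ), HasDerivAt T (DT x) x) ∧ (∀ n, CMg (Ioi (1:ℝ)) n DT) := by
      rcases eq_or_lt_of_le hα2 with hhalf | hlt
      · -- α = 1/2
        refine ⟨id, fun _ => 1, ?_, ?_, ?_, ?_⟩
        · intro v hv
          have h2α : 2 * α = 1 := by rw [hhalf]; norm_num
          rw [h2α]
          simp only [id_eq, Real.rpow_one, Real.rpow_neg_one, one_div]
        · exact fun x hx => le_of_lt hx
        · exact fun x _ => hasDerivAt_id x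
        · exact fun n => CMg_const zero_le_one
      · have hβ0' : 0 < 2 * α := by linarith
        have hβ1' : 2 * α < 1 := by linarith
        refine ⟨S (2*α), fun x => ((2*α) / Mc (2*α)) * Ik (2*α) 0 x,
          S_val hβ0' hβ1', fun x hx => S_ge_one hβ0' hβ1' hx,
          fun x hx => S_hasDerivAt hβ0' hβ1' hx, fun n => ?_⟩
        exact CMg_const_mul (le_of_lt (div_pos hβ0' (Mc_pos hβ0' hβ1'))) (Ik_CMg hβ0' hβ1' n)
    -- the `α`-part
    have hAval : ∀ v : ℝ, 0 < v → S α (v + 1/v) = v ^ α + v ^ (-α) := S_val hα0 hα1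
    have hAge : ∀ x ∈ Ioi (1:ℝ), 1 ≤ S α x := fun x hx => S_ge_one hα0 hα1 hx
    have hAder : ∀ x ∈ Ioi (1:ℝ), HasDerivAt (S α) ((α / Mc α) * Ik α 0 x) x :=
      fun x hx => S_hasDerivAt hα0 hα1 hx
    have hAcm : ∀ n, CMg (Ioi (1:ℝ)) n (fun x => (α / Mc α) * Ik α 0 x) :=
      fun n => CMg_const_mul (le_of_lt (div_pos hα0 (Mc_pos hα0 hα1))) (Ik_CMg hα0 hα1 n)
    -- the denominator function
    set φ : ℝ → ℝ := fun x => K + (b * S α x + T x) with hφ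
    have hφpos : ∀ x ∈ Ioi (1:ℝ), 0 < φ x := by
      intro x hx
      have h1 := hAge x hx
      have h2 := hTge x hx
      have h3 : 0 ≤ b * S α x := mul_nonneg hbpos.le (by linarith)
      simp only [hφ]
      nlinarith
    have hφderiv : ∀ x ∈ Ioi (1:ℝ),
        HasDerivAt φ (b * ((α / Mc α) * Ik α 0 x) + DT x) x := by
      intro x hx
      exact (((hAder x hx).const_mul b).add (hTder x hx)).const_add K
    have hφdiff : ∀ x ∈ Ioi (1:ℝ), DifferentiableAt ℝ φ x :=
      fun x hx => (hφderiv x hx).differentiableAt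
    have hdercm : ∀ n, CMg (Ioi (1:ℝ)) n (deriv φ) := by
      intro n
      apply CMg_congr isOpen_Ioi
        (f := fun x => b * ((α / Mc α) * Ik α 0 x) + DT x)
      · exact fun x hx => ((hφderiv x hx).deriv).symm
      · exact CMg_add isOpen_Ioi (CMg_const_mul hbpos.le (hAcm n)) (hTcm n)
    have hinv := CMg_inv isOpen_Ioi hφpos hφdiff hdercm
    refine ⟨fun w => (φ w)⁻¹, ?_, ?_⟩
    · intro n x hx
      have hx1 : x ∈ Ioi (1:ℝ) := mem_Ioi.2 (lt_of_lt_of_le one_lt_two hx)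
      rw [iteratedDeriv_eq_iterate]
      exact ((hinv n) n le_rfl).2 x hx1
    · intro v hv
      have hTv := hTval v hv
      have hAv := hAval v hv
      have hφv : φ (v + 1/v) = K + (b * (v ^ α + v ^ (-α)) + (v ^ (2*α) + v ^ (-(2*α)))) := by
        simp only [hφ]
        rw [hAv, hTv]
      show 1 / (K + v ^ (2 * α) + v ^ (-(2 * α)) + b * (v ^ α + v ^ (-α)))
          = (φ (v + 1/v))⁻¹
      rw [hφv, one_div]
      congr 1
      ring
  refine ⟨main, ?_⟩
  intro u hu
  obtain ⟨H, hH, hval⟩ := main u hu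
  refine ⟨H, hH, ?_⟩
  intro v hv
  rw [← hval v hv]
  have huv : (0:ℝ) < u * v := mul_pos hu hv
  have huv' : (0:ℝ) < u / v := div_pos hu hv
  have hX : (0:ℝ) < u ^ α := Real.rpow_pos_of_pos hu _
  have hX' : (0:ℝ) < u ^ (-α) := Real.rpow_pos_of_pos hu _
  have hY : (0:ℝ) < v ^ α := Real.rpow_pos_of_pos hv _
  have hY' : (0:ℝ) < v ^ (-α) := Real.rpow_pos_of_pos hv _
  have hXX' : u ^ α * u ^ (-α) = 1 := by
    rw [← Real.rpow_add hu]; simp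
  have hYY' : v ^ α * v ^ (-α) = 1 := by
    rw [← Real.rpow_add hv]; simp
  have hA : (u * v) ^ α = u ^ α * v ^ α := Real.mul_rpow hu.le hv.le
  have hA' : (u * v) ^ (-α) = u ^ (-α) * v ^ (-α) := Real.mul_rpow hu.le hv.le
  have hB : (u / v) ^ α = u ^ α * v ^ (-α) := by
    rw [div_eq_mul_inv, Real.mul_rpow hu.le (inv_nonneg.2 hv.le),
      Real.inv_rpow hv.le, ← Real.rpow_neg hv.le]
  have hB' : (u / v) ^ (-α) = u ^ (-α) * v ^ α := by
    rw [div_eq_mul_inv, Real.mul_rpow hu.le (inv_nonneg.2 hv.le),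
      Real.inv_rpow hv.le, ← Real.rpow_neg hv.le, neg_neg]
  have hu2 : u ^ (2*α) = u ^ α * u ^ α := by
    rw [show 2*α = α + α by ring, Real.rpow_add hu]
  have hu2' : u ^ (-(2*α)) = u ^ (-α) * u ^ (-α) := by
    rw [show -(2*α) = -α + -α by ring, Real.rpow_add hu]
  have hv2 : v ^ (2*α) = v ^ α * v ^ α := by
    rw [show 2*α = α + α by ring, Real.rpow_add hv]
  have hv2' : v ^ (-(2*α)) = v ^ (-α) * v ^ (-α) := by
    rw [show -(2*α) = -α + -α by ring, Real.rpow_add hv]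
  show 1 / (c + (u*v) ^ α + (u*v) ^ (-α)) * (1 / (c + (u/v) ^ α + (u/v) ^ (-α))) = _
  rw [hA, hA', hB, hB', hu2, hu2', hv2, hv2']
  rw [div_mul_div_comm, one_mul]
  congr 1
  linear_combination (u ^ α * u ^ α + u ^ (-α) * u ^ (-α)) * hYY'
    + (v ^ α * v ^ α + v ^ (-α) * v ^ (-α)) * hXX'
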